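/- Let n ≥ 1 be an integer and γ ≥ 1 a real number. If f ∈ A_n satisfies |z·f''(z) + (γ−1)·(f'(z) − f(z)/z)| < (n+γ)/2 for all z ∈ 𝔻 \ {0}, then f ∈ Ω_n (i.e., |z·f'(z) − f(z)| < 1/2 for all z ∈ 𝔻). -/

import Mathlib

open Complex Metric Function Asymptotics Filter Topology

/-- The open unit disc in `ℂ`. -/
def unitDisc : Set ℂ := Metric.ball 0 1

/-- `f ∈ 𝒜ₙ`: `f` is analytic on the unit disc with power series
`f(z) = z + ∑_{k=n+1}^∞ a_k z^k`. -/
def MemA (n : ℕ) (f : ℂ → ℂ) : Prop :=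
  DifferentiableOn ℂ f unitDisc ∧
    ∃ a : ℕ → ℂ, ∀ z ∈ unitDisc, f z = z + ∑' k : ℕ, a k * z ^ (n + 1 + k)

/-- `f ∈ Ωₙ`: `f ∈ 𝒜ₙ` and `|z f'(z) - f(z)| < 1/2` on the unit disc. -/
def MemOmega (n : ℕ) (f : ℂ → ℂ) : Prop :=
  MemA n f ∧ ∀ z ∈ unitDisc, ‖z * deriv f z - f z‖ < 1 / 2

lemma aux_diff_iterate (m : ℕ) (u : ℂ → ℂ) (hu : DifferentiableOn ℂ u (ball 0 1)) :
    DifferentiableOn ℂ ((Function.swap dslope 0)^[m] u) (ball (0:ℂ) 1) := by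
  induction m generalizing u with
  | zero => exact hu
  | succ k ih =>
      rw [Function.iterate_succ_apply]
      exact ih _ ((Complex.differentiableOn_dslope (ball_mem_nhds 0 one_pos)).mpr hu)

lemma aux_factor (m : ℕ) (u : ℂ → ℂ) (hu : DifferentiableOn ℂ u (ball 0 1))
    (hO : u =O[𝓝[≠] (0:ℂ)] fun z => z ^ m) :
    ∀ z ∈ ball (0:ℂ) 1, u z = z ^ m * (Function.swap dslope 0)^[m] u z := by
  induction m generalizing u with
  | zero => intro z hz; simp
  | succ k ih =>
      have hu0 : u 0 = 0 := by
        have h1 : Tendsto u (𝓝[≠] (0:ℂ)) (𝓝 0) := by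
          refine hO.trans_tendsto ?_
          have : ContinuousAt (fun z : ℂ => z ^ (k+1)) 0 := by fun_prop
          simpa using this.continuousWithinAt.tendsto
        have h2 : Tendsto u (𝓝[≠] (0:ℂ)) (𝓝 (u 0)) :=
          ((hu.continuousOn.continuousAt (ball_mem_nhds 0 one_pos)).tendsto).mono_left
            nhdsWithin_le_nhds
        exact tendsto_nhds_unique h2 h1
      set v := dslope u 0 with hv
      have hvdiff : DifferentiableOn ℂ v (ball 0 1) :=
        (Complex.differentiableOn_dslope (ball_mem_nhds 0 one_pos)).mpr hu
      have hOv : v =O[𝓝[≠] (0:ℂ)] fun z => z ^ k := by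
        have he : (fun z : ℂ => z⁻¹ * u z) =ᶠ[𝓝[≠] (0:ℂ)] v := by
          filter_upwards [self_mem_nhdsWithin] with z hz
          rw [hv, dslope_of_ne _ hz, slope_def_field, hu0, sub_zero, sub_zero, div_eq_inv_mul]
        have hO2 : (fun z : ℂ => z⁻¹ * u z) =O[𝓝[≠] (0:ℂ)] fun z => z⁻¹ * z ^ (k+1) :=
          (isBigO_refl (fun z : ℂ => z⁻¹) _).mul hO
        refine (hO2.congr' he ?_)
        filter_upwards [self_mem_nhdsWithin] with z hz
        have hz' : (z:ℂ) ≠ 0 := hz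
        field_simp [pow_succ]
        ring
      have hiter := ih v hvdiff hOv
      intro z hz
      have h1 : z * v z = u z := by
        have := sub_smul_dslope u 0 z
        simpa [hu0] using this
      have h2 : (Function.swap dslope 0)^[k+1] u = (Function.swap dslope 0)^[k] v := by
        rw [Function.iterate_succ_apply]
      rw [h2]
      calc u z = z * v z := h1.symm
        _ = z * (z ^ k * (Function.swap dslope 0)^[k] v z) := by rw [← hiter z hz]
        _ = z ^ (k+1) * (Function.swap dslope 0)^[k] v z := by ring

theorem stmt_0 (n : ℕ) (hn : 1 ≤ n) (γ : ℝ) (hγ : 1 ≤ γ) (f : ℂ → ℂ)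
    (hf : MemA n f)
    (h : ∀ z ∈ unitDisc, z ≠ 0 →
      ‖z * deriv (deriv f) z + ((γ : ℂ) - 1) * (deriv f z - f z / z)‖ < ((n : ℝ) + γ) / 2) :
    MemOmega n f := by
  by_cases hA : ∀ z ∈ unitDisc, f z = z
  · refine ⟨hf, fun z hz => ?_⟩
    have hfe : f =ᶠ[𝓝 z] id := by
      filter_upwards [isOpen_ball.mem_nhds hz] with w hw
      exact hA w hw
    have hd1 : deriv f z = 1 := by rw [hfe.deriv_eq, deriv_id]
    rw [hd1, hA z hz]
    norm_num
  · push_neg at hA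
    obtain ⟨z₁, hz₁, hfz₁⟩ := hA
    obtain ⟨hdiff, a, ha⟩ := id hf
    -- basic facts about z₁
    have htsum : f z₁ = z₁ + ∑' k : ℕ, a k * z₁ ^ (n + 1 + k) := ha z₁ hz₁
    have hts_ne : (∑' k : ℕ, a k * z₁ ^ (n + 1 + k)) ≠ 0 := by
      intro h0; exact hfz₁ (by rw [htsum, h0, add_zero])
    have hsum : Summable (fun k => a k * z₁ ^ (n + 1 + k)) := by
      by_contra hc
      exact hts_ne (tsum_eq_zero_of_not_summable hc)
    have hz₁0 : z₁ ≠ 0 := by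
      rintro rfl
      exact hts_ne (by simp [pow_succ])
    have hρ0 : 0 < ‖z₁‖ := norm_pos_iff.mpr hz₁0
    have hρ1 : ‖z₁‖ < 1 := by simpa [unitDisc, mem_ball, dist_eq_norm] using hz₁
    -- summability of norms
    have hsumn : Summable (fun k => ‖a k * z₁ ^ (n + 1 + k)‖) := hsum.norm
    have hsumk : Summable (fun k => ‖a k * z₁ ^ k‖) := by
      have : Summable (fun k => a k * z₁ ^ k) := by
        have h2 : Summable (fun k => a k * z₁ ^ (n + 1 + k) * (z₁ ^ (n+1))⁻¹) :=
          hsum.mul_right _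
        refine h2.congr fun k => ?_
        field_simp [pow_add]
        ring
      exact this.norm
    set C : ℝ := ∑' k, ‖a k * z₁ ^ k‖ with hC
    -- the big-O bound
    have hbd : ∀ z : ℂ, ‖z‖ < ‖z₁‖ → ‖f z - z‖ ≤ C * ‖z ^ (n+1)‖ := by
      intro z hzρ
      have hzD : z ∈ unitDisc := by
        simp only [unitDisc, mem_ball, dist_eq_norm, sub_zero]
        exact hzρ.trans hρ1
      have hzle : ‖z‖ ≤ ‖z₁‖ := hzρ.le
      have hptle : ∀ k : ℕ, ‖a k * z ^ (n+1+k)‖ ≤ ‖a k * z₁ ^ (n+1+k)‖ := by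
        intro k
        rw [norm_mul, norm_mul, norm_pow, norm_pow]
        exact mul_le_mul_of_nonneg_left
          (pow_le_pow_left₀ (norm_nonneg z) hzle _) (norm_nonneg _)
      have hzsumn : Summable (fun k => ‖a k * z ^ (n+1+k)‖) :=
        Summable.of_nonneg_of_le (fun k => norm_nonneg _) hptle hsumn
      have hzsum : Summable (fun k => a k * z ^ (n+1+k)) :=
        hzsumn.of_norm
      have h1 : ‖f z - z‖ ≤ ∑' k, ‖a k * z ^ (n+1+k)‖ := by
        rw [ha z hzD, add_sub_cancel_left]
        exact norm_tsum_le_tsum_norm hzsumn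
      have hkle : ∀ k : ℕ, ‖a k * z ^ k‖ ≤ ‖a k * z₁ ^ k‖ := by
        intro k
        rw [norm_mul, norm_mul, norm_pow, norm_pow]
        exact mul_le_mul_of_nonneg_left
          (pow_le_pow_left₀ (norm_nonneg z) hzle _) (norm_nonneg _)
      have hzsumk : Summable (fun k => ‖a k * z ^ k‖) :=
        Summable.of_nonneg_of_le (fun k => norm_nonneg _) hkle hsumk
      have h2 : (∑' k, ‖a k * z ^ (n+1+k)‖) = (∑' k, ‖a k * z ^ k‖) * ‖z‖^(n+1) := by
        rw [← tsum_mul_right]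
        congr 1; funext k
        rw [norm_mul, norm_mul, norm_pow, norm_pow, pow_add]
        ring
      have h3 : (∑' k, ‖a k * z ^ k‖) ≤ C := Summable.tsum_le_tsum hkle hzsumk hsumk
      calc ‖f z - z‖ ≤ (∑' k, ‖a k * z ^ k‖) * ‖z‖^(n+1) := by rw [← h2]; exact h1
        _ ≤ C * ‖z‖^(n+1) := by
            exact mul_le_mul_of_nonneg_right h3 (by positivity)
        _ = C * ‖z ^ (n+1)‖ := by rw [norm_pow]
    have hO : (fun z => f z - z) =O[𝓝[≠] (0:ℂ)] fun z => z ^ (n+1) := by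
      rw [isBigO_iff]
      refine ⟨C, ?_⟩
      have hmem : ball (0:ℂ) ‖z₁‖ ∈ 𝓝[≠] (0:ℂ) :=
        mem_nhdsWithin_of_mem_nhds (ball_mem_nhds 0 hρ0)
      filter_upwards [hmem] with z hz
      exact hbd z (by simpa [mem_ball, dist_eq_norm] using hz)
    -- factor u = f - id
    set u : ℂ → ℂ := fun z => f z - z with hu_def
    have hudiff : DifferentiableOn ℂ u (ball 0 1) := by
      exact hdiff.sub differentiableOn_id
    set p : ℂ → ℂ := (Function.swap dslope 0)^[n+1] u with hp_def
    have hpdiff : DifferentiableOn ℂ p (ball 0 1) := aux_diff_iterate _ _ hudiff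
    have hup : ∀ z ∈ ball (0:ℂ) 1, u z = z^(n+1) * p z := aux_factor _ _ hudiff hO
    have hpan : AnalyticOnNhd ℂ p (ball 0 1) := hpdiff.analyticOnNhd isOpen_ball
    have hp'diff : DifferentiableOn ℂ (deriv p) (ball 0 1) :=
      hpan.deriv.differentiableOn
    have hp''diff : DifferentiableOn ℂ (deriv (deriv p)) (ball 0 1) :=
      hpan.deriv.deriv.differentiableOn
    have hp'at : ∀ z ∈ ball (0:ℂ) 1, DifferentiableAt ℂ p z := fun z hz =>
      hpdiff.differentiableAt (isOpen_ball.mem_nhds hz)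
    have hp''at : ∀ z ∈ ball (0:ℂ) 1, DifferentiableAt ℂ (deriv p) z := fun z hz =>
      hp'diff.differentiableAt (isOpen_ball.mem_nhds hz)
    have hp'''at : ∀ z ∈ ball (0:ℂ) 1, DifferentiableAt ℂ (deriv (deriv p)) z := fun z hz =>
      hp''diff.differentiableAt (isOpen_ball.mem_nhds hz)
    -- derivative of f
    have hf' : ∀ z ∈ ball (0:ℂ) 1, deriv f z
        = 1 + (((n:ℂ)+1) * z^n * p z + z^(n+1) * deriv p z) := by
      intro z hz
      have hfe : f =ᶠ[𝓝 z] fun w => w + w^(n+1) * p w := by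
        filter_upwards [isOpen_ball.mem_nhds hz] with w hw
        have := hup w hw
        simp only [hu_def] at this
        linear_combination this
      rw [hfe.deriv_eq]
      have hd : HasDerivAt (fun w : ℂ => w + w^(n+1) * p w)
          (1 + ((↑(n+1) * z^(n+1-1)) * p z + z^(n+1) * deriv p z)) z :=
        (hasDerivAt_id z).add (((hasDerivAt_pow (n+1) z)).mul ((hp'at z hz).hasDerivAt))
      rw [hd.deriv]
      push_cast
      ring_nf
    have hq_diffat : ∀ z ∈ ball (0:ℂ) 1,
        DifferentiableAt ℂ (fun w => (n:ℂ) * p w + w * deriv p w) z := by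
      intro z hz
      exact ((hp'at z hz).const_mul _).add
        ((differentiableAt_id.mul (hp''at z hz)))
    set q : ℂ → ℂ := fun w => (n:ℂ) * p w + w * deriv p w with hq_def
    have hqdiff : DifferentiableOn ℂ q (ball 0 1) := fun z hz =>
      (hq_diffat z hz).differentiableWithinAt
    have hqan : AnalyticOnNhd ℂ q (ball 0 1) := hqdiff.analyticOnNhd isOpen_ball
    have hq'diff : DifferentiableOn ℂ (deriv q) (ball 0 1) := hqan.deriv.differentiableOn
    -- the central factorization z f' - f = z^(n+1) q
    have hgq : ∀ z ∈ ball (0:ℂ) 1, z * deriv f z - f z = z^(n+1) * q z := by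
      intro z hz
      have h1 := hf' z hz
      have h2 := hup z hz
      simp only [hu_def] at h2
      rw [h1, hq_def]
      have : f z = z + z^(n+1) * p z := by linear_combination h2
      rw [this]
      ring
    -- second derivative of f
    have hf'' : ∀ z ∈ ball (0:ℂ) 1, deriv (deriv f) z
        = ((n:ℂ)+1) * ((n:ℂ) * z^(n-1)) * p z + ((n:ℂ)+1) * z^n * deriv p z
          + (((n:ℂ)+1) * z^n * deriv p z + z^(n+1) * deriv (deriv p) z) := by
      intro z hz
      have hfe : deriv f =ᶠ[𝓝 z]
          fun w => 1 + (((n:ℂ)+1) * w^n * p w + w^(n+1) * deriv p w) := by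
        filter_upwards [isOpen_ball.mem_nhds hz] with w hw
        exact hf' w hw
      rw [hfe.deriv_eq]
      have hd : HasDerivAt
          (fun w : ℂ => 1 + (((n:ℂ)+1) * w^n * p w + w^(n+1) * deriv p w))
          ((((n:ℂ)+1) * (↑n * z^(n-1)) * p z + ((n:ℂ)+1) * z^n * deriv p z)
            + ((↑(n+1) * z^(n+1-1)) * deriv p z + z^(n+1) * deriv (deriv p) z)) z := by
        have h1 : HasDerivAt (fun w : ℂ => ((n:ℂ)+1) * w^n)
            (((n:ℂ)+1) * (↑n * z^(n-1))) z := (hasDerivAt_pow n z).const_mul _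
        have h2 : HasDerivAt (fun w : ℂ => ((n:ℂ)+1) * w^n * p w)
            (((n:ℂ)+1) * (↑n * z^(n-1)) * p z + ((n:ℂ)+1) * z^n * deriv p z) z :=
          h1.mul (hp'at z hz).hasDerivAt
        have h3 : HasDerivAt (fun w : ℂ => w^(n+1) * deriv p w)
            ((↑(n+1) * z^(n+1-1)) * deriv p z + z^(n+1) * deriv (deriv p) z) z :=
          (hasDerivAt_pow (n+1) z).mul (hp''at z hz).hasDerivAt
        exact (h2.add h3).const_add 1
      rw [hd.deriv]
      push_cast
      ring_nf
    -- derivative of q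
    have hq' : ∀ z ∈ ball (0:ℂ) 1, deriv q z
        = (n:ℂ) * deriv p z + (deriv p z + z * deriv (deriv p) z) := by
      intro z hz
      have hd : HasDerivAt q
          ((n:ℂ) * deriv p z + (1 * deriv p z + z * deriv (deriv p) z)) z := by
        have h1 : HasDerivAt (fun w : ℂ => (n:ℂ) * p w) ((n:ℂ) * deriv p z) z :=
          (hp'at z hz).hasDerivAt.const_mul _
        have h2 : HasDerivAt (fun w : ℂ => w * deriv p w)
            (1 * deriv p z + z * deriv (deriv p) z) z :=
          (hasDerivAt_id z).mul (hp''at z hz).hasDerivAt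
        exact h1.add h2
      rw [hd.deriv]; ring
    -- φ
    set φ : ℂ → ℂ := fun w => ((n:ℂ) + (γ:ℂ)) * q w + w * deriv q w with hφ_def
    have hφdiff : DifferentiableOn ℂ φ (ball 0 1) := by
      refine DifferentiableOn.add ?_ ?_
      · exact hqdiff.const_mul _
      · exact differentiableOn_id.mul hq'diff
    -- key identity: E z = z^n * φ z for z ≠ 0
    have hE : ∀ z ∈ ball (0:ℂ) 1, z ≠ 0 →
        z * deriv (deriv f) z + ((γ:ℂ) - 1) * (deriv f z - f z / z) = z^n * φ z := by
      intro z hz hz0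
      obtain ⟨m, rfl⟩ : ∃ m, n = m + 1 := ⟨n - 1, by omega⟩
      have e1 := hf' z hz
      have e2 := hf'' z hz
      have e3 := hq' z hz
      have e4 := hup z hz
      simp only [hu_def] at e4
      have e5 : f z = z + z^(m+1+1) * p z := by linear_combination e4
      rw [e1, e2, e5]
      simp only [hφ_def, hq_def]
      rw [e3]
      simp only [Nat.add_sub_cancel]
      field_simp
      ring
    -- maximum modulus: ‖φ‖ ≤ (n+γ)/2 on the disc
    have hφM : ∀ z ∈ ball (0:ℂ) 1, ‖φ z‖ ≤ ((n:ℝ) + γ)/2 := by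
      intro z hz
      have hz1 : ‖z‖ < 1 := by simpa [mem_ball, dist_eq_norm] using hz
      have key : ∀ r : ℝ, r ∈ Set.Ioo ‖z‖ 1 → ‖φ z‖ ≤ ((n:ℝ) + γ)/2 / r^n := by
        intro r hr
        have hr0 : 0 < r := lt_of_le_of_lt (norm_nonneg z) hr.1
        have hsub : closure (ball (0:ℂ) r) ⊆ ball (0:ℂ) 1 := by
          rw [closure_ball (0:ℂ) (ne_of_gt hr0)]
          exact closedBall_subset_ball hr.2
        have hd : DiffContOnCl ℂ φ (ball 0 r) := (hφdiff.mono hsub).diffContOnCl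
        have hfro : ∀ w ∈ frontier (ball (0:ℂ) r), ‖φ w‖ ≤ ((n:ℝ) + γ)/2 / r^n := by
          intro w hw
          rw [frontier_ball (0:ℂ) (ne_of_gt hr0)] at hw
          have hwn : ‖w‖ = r := by simpa [mem_sphere_iff_norm] using hw
          have hw0 : w ≠ 0 := norm_pos_iff.mp (hwn ▸ hr0)
          have hwD : w ∈ ball (0:ℂ) 1 := by
            simp only [mem_ball, dist_eq_norm, sub_zero]
            rw [hwn]; exact hr.2
          have hhw := h w hwD hw0
          rw [hE w hwD hw0] at hhw
          rw [norm_mul, norm_pow, hwn] at hhw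
          rw [le_div_iff₀ (pow_pos hr0 n)]
          linarith [hhw]
        have hzcl : z ∈ closure (ball (0:ℂ) r) := by
          rw [closure_ball (0:ℂ) (ne_of_gt hr0)]
          simp only [mem_closedBall, dist_eq_norm, sub_zero]
          exact hr.1.le
        exact Complex.norm_le_of_forall_mem_frontier_norm_le isBounded_ball hd hfro hzcl
      have hten : Filter.Tendsto (fun r : ℝ => ((n:ℝ) + γ)/2 / r^n) (𝓝[<] (1:ℝ))
          (𝓝 (((n:ℝ) + γ)/2)) := by
        have hc : ContinuousAt (fun r : ℝ => ((n:ℝ) + γ)/2 / r^n) 1 := by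
          apply ContinuousAt.div continuousAt_const (by fun_prop)
          norm_num
        have h2 : Filter.Tendsto (fun r : ℝ => ((n:ℝ) + γ)/2 / r^n) (𝓝[<] (1:ℝ))
            (𝓝 (((n:ℝ) + γ)/2 / (1:ℝ)^n)) :=
          hc.tendsto.mono_left nhdsWithin_le_nhds
        simpa using h2
      refine ge_of_tendsto hten ?_
      filter_upwards [Ioo_mem_nhdsLT_of_mem (Set.mem_Ioc.mpr ⟨hz1, le_refl 1⟩)] with r hr
      exact key r hr
    -- the integral representation gives ‖q z‖ ≤ 1/2
    have hnγ : (0:ℝ) < (n:ℝ) + γ := by positivity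
    have hnγ1 : (1:ℝ) ≤ (n:ℝ) + γ - 1 := by
      have : (1:ℝ) ≤ (n:ℝ) := by exact_mod_cast hn
      linarith
    have hq_half : ∀ z ∈ ball (0:ℂ) 1, ‖q z‖ ≤ 1/2 := by
      intro z hz
      have hz1 : ‖z‖ < 1 := by simpa [mem_ball, dist_eq_norm] using hz
      set F : ℝ → ℂ := fun t => ((t ^ ((n:ℝ)+γ) : ℝ) : ℂ) * q ((t:ℂ) * z) with hF_def
      set G : ℝ → ℂ := fun t => ((t ^ ((n:ℝ)+γ-1) : ℝ) : ℂ) * φ ((t:ℂ) * z) with hG_def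
      have hmapsto : ∀ t : ℝ, t ∈ Set.uIcc (0:ℝ) 1 → ((t:ℂ) * z) ∈ ball (0:ℂ) 1 := by
        intro t ht
        rw [Set.uIcc_of_le (by norm_num : (0:ℝ) ≤ 1)] at ht
        simp only [mem_ball, dist_eq_norm, sub_zero, norm_mul]
        have habs : ‖(t:ℂ)‖ ≤ 1 := by
          rw [Complex.norm_real, Real.norm_eq_abs, _root_.abs_of_nonneg ht.1]
          exact ht.2
        calc ‖(t:ℂ)‖ * ‖z‖ ≤ 1 * ‖z‖ := mul_le_mul_of_nonneg_right habs (norm_nonneg z)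
          _ = ‖z‖ := one_mul _
          _ < 1 := hz1
      have hFderiv : ∀ t ∈ Set.uIcc (0:ℝ) 1, HasDerivAt F (G t) t := by
        intro t ht
        have ht' := ht
        rw [Set.uIcc_of_le (by norm_num : (0:ℝ) ≤ 1)] at ht'
        have hA : HasDerivAt (fun s : ℝ => s ^ ((n:ℝ)+γ))
            (((n:ℝ)+γ) * t ^ ((n:ℝ)+γ-1)) t :=
          Real.hasDerivAt_rpow_const (Or.inr (by linarith))
        have hAc : HasDerivAt (fun s : ℝ => (((s ^ ((n:ℝ)+γ) : ℝ)) : ℂ))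
            ((((((n:ℝ)+γ) * t ^ ((n:ℝ)+γ-1)) : ℝ)) : ℂ) t := hA.ofReal_comp
        have hB : HasDerivAt (fun s : ℝ => q ((s:ℂ) * z))
            (deriv q ((t:ℂ) * z) * z) t := by
          have hin : HasDerivAt (fun w : ℂ => w * z) z (t:ℂ) := by
            simpa using (hasDerivAt_id ((t:ℂ))).mul_const z
          have hq : HasDerivAt q (deriv q ((t:ℂ) * z)) ((t:ℂ) * z) :=
            ((hq_diffat _ (hmapsto t ht)).hasDerivAt)
          exact (hq.comp (t:ℂ) hin).comp_ofReal
        have hcomb := hAc.mul hB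
        have heq : ((((((n:ℝ)+γ) * t ^ ((n:ℝ)+γ-1)) : ℝ)) : ℂ) * q ((t:ℂ) * z)
            + (((t ^ ((n:ℝ)+γ) : ℝ)) : ℂ) * (deriv q ((t:ℂ) * z) * z) = G t := by
          rw [hG_def]
          rcases eq_or_ne t 0 with rfl | ht0
          · simp [Real.zero_rpow (by linarith : (n:ℝ)+γ ≠ 0),
              Real.zero_rpow (by linarith : (n:ℝ)+γ-1 ≠ 0)]
          · have hpow : t ^ ((n:ℝ)+γ) = t ^ ((n:ℝ)+γ-1) * t := by
              have : (n:ℝ)+γ = ((n:ℝ)+γ-1) + 1 := by ring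
              rw [this, Real.rpow_add_one ht0]; ring_nf
            rw [hpow, hφ_def]
            push_cast
            ring
        rw [← heq]
        exact hcomb
      have hGcont : ContinuousOn G (Set.uIcc (0:ℝ) 1) := by
        refine ContinuousOn.mul ?_ ?_
        · refine Continuous.continuousOn ?_
          exact Complex.continuous_ofReal.comp (Real.continuous_rpow_const (by linarith))
        · refine (hφdiff.continuousOn).comp ?_ ?_
          · exact Continuous.continuousOn (Complex.continuous_ofReal.mul continuous_const)
          · intro t ht
            exact hmapsto t ht
      have hGint : IntervalIntegrable G MeasureTheory.volume 0 1 :=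
        hGcont.intervalIntegrable
      have hFTC := intervalIntegral.integral_eq_sub_of_hasDerivAt hFderiv hGint
      have hF1 : F 1 = q z := by
        simp [hF_def, Real.one_rpow]
      have hF0 : F 0 = 0 := by
        simp [hF_def, Real.zero_rpow (by linarith : (n:ℝ)+γ ≠ 0)]
      have hqz : q z = ∫ t in (0:ℝ)..1, G t := by
        rw [hFTC, hF1, hF0, sub_zero]
      -- bound the integral
      have hGbound : ∀ t ∈ Set.Icc (0:ℝ) 1, ‖G t‖ ≤ t ^ ((n:ℝ)+γ-1) * (((n:ℝ)+γ)/2) := by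
        intro t ht
        rw [hG_def]
        simp only [norm_mul, Complex.norm_real, Real.norm_eq_abs]
        rw [_root_.abs_of_nonneg (Real.rpow_nonneg ht.1 _)]
        refine mul_le_mul_of_nonneg_left ?_ (Real.rpow_nonneg ht.1 _)
        exact hφM _ (hmapsto t (by rw [Set.uIcc_of_le (by norm_num : (0:ℝ) ≤ 1)]; exact ht))
      have hnorm : ‖q z‖ ≤ ∫ t in (0:ℝ)..1, t ^ ((n:ℝ)+γ-1) * (((n:ℝ)+γ)/2) := by
        rw [hqz]
        refine (intervalIntegral.norm_integral_le_integral_norm (by norm_num)).trans ?_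
        refine intervalIntegral.integral_mono_on (by norm_num) ?_ ?_ ?_
        · exact hGint.norm
        · refine (ContinuousOn.intervalIntegrable ?_)
          refine ContinuousOn.mul ?_ continuousOn_const
          exact Continuous.continuousOn (Real.continuous_rpow_const (by linarith))
        · exact hGbound
      have hval : (∫ t in (0:ℝ)..1, t ^ ((n:ℝ)+γ-1) * (((n:ℝ)+γ)/2)) = 1/2 := by
        rw [intervalIntegral.integral_mul_const, integral_rpow (Or.inl (by linarith))]
        have : (n:ℝ)+γ-1+1 = (n:ℝ)+γ := by ring
        rw [this]
        rw [Real.one_rpow, Real.zero_rpow (by linarith : (n:ℝ)+γ ≠ 0)]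
        field_simp
        norm_num
      rw [hval] at hnorm
      exact hnorm
    -- conclusion
    refine ⟨hf, fun z hz => ?_⟩
    have hzb : z ∈ ball (0:ℂ) 1 := hz
    have hz1 : ‖z‖ < 1 := by simpa [mem_ball, dist_eq_norm] using hzb
    rw [hgq z hzb, norm_mul, norm_pow]
    have h1 : ‖z‖^(n+1) < 1 := pow_lt_one₀ (norm_nonneg z) hz1 (by omega)
    have h2 : ‖q z‖ ≤ 1/2 := hq_half z hzb
    nlinarith [norm_nonneg (q z), pow_nonneg (norm_nonneg z) (n+1)]
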